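/- Let A be a d×d real matrix with nonnegative entries whose columns each sum to 1. Suppose u, v, ũ, ṽ ∈ ℝ^d are such that the matrices T and T̃ with entries T_{mn} = e^{u_m+v_n}A_{mn} and T̃_{mn} = e^{ũ_m+ṽ_n}A_{mn} satisfy T·𝟙 = T̃·𝟙 and Σ_m T_{mn} = Σ_m T̃_{mn} = 1 for every n. Then T = T̃. -/
import Mathlib


open Matrix Real

/-- **Uniqueness of double scalings of a stochastic matrix with given marginals.**
Let `A` be a column-stochastic matrix (nonnegative entries, columns summing to 1).
If two double-scaled matrices `T m n = e^{u m + v n} A m n` and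
`T' m n = e^{u' m + v' n} A m n` have the same row sums and both have all column
sums equal to `1`, then `T = T'`. -/
theorem double_scaling_unique
    (d : ℕ) (A : Matrix (Fin d) (Fin d) ℝ)
    (hA : ∀ m n, 0 ≤ A m n) (hAcol : ∀ n, ∑ m, A m n = 1)
    (u v u' v' : Fin d → ℝ)
    (T T' : Matrix (Fin d) (Fin d) ℝ)
    (hT : ∀ m n, T m n = Real.exp (u m + v n) * A m n)
    (hT' : ∀ m n, T' m n = Real.exp (u' m + v' n) * A m n)
    (hrow : ∀ m, ∑ n, T m n = ∑ n, T' m n)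
    (hcolT : ∀ n, ∑ m, T m n = 1)
    (hcolT' : ∀ n, ∑ m, T' m n = 1) :
    T = T' := by
  set f : Fin d → ℝ := fun m => u m - u' m with hf
  set g : Fin d → ℝ := fun n => v n - v' n with hg
  have hpt : ∀ m n, T m n = Real.exp (f m + g n) * T' m n := by
    intro m n
    rw [hT, hT', ← mul_assoc, ← Real.exp_add]
    congr 2
    simp only [hf, hg]
    ring
  have hT'nn : ∀ m n, 0 ≤ T' m n := fun m n => by
    rw [hT']; exact mul_nonneg (Real.exp_pos _).le (hA m n)
  have hTnn : ∀ m n, 0 ≤ T m n := fun m n => by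
    rw [hT]; exact mul_nonneg (Real.exp_pos _).le (hA m n)
  have hFnn : ∀ m n, 0 ≤ (T m n - T' m n) * (f m + g n) := by
    intro m n
    have h1 : 0 ≤ T' m n * (Real.exp (f m + g n) - 1 - (f m + g n)) := by
      apply mul_nonneg (hT'nn m n)
      have := Real.add_one_le_exp (f m + g n); linarith
    have h2 : 0 ≤ T m n * (Real.exp (-(f m + g n)) - 1 + (f m + g n)) := by
      apply mul_nonneg (hTnn m n)
      have := Real.add_one_le_exp (-(f m + g n)); linarith
    have e1 : Real.exp (f m + g n) * T' m n = T m n := (hpt m n).symm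
    have e2 : Real.exp (-(f m + g n)) * T m n = T' m n := by
      rw [hpt m n, ← mul_assoc, ← Real.exp_add]
      have hz : -(f m + g n) + (f m + g n) = 0 := by ring
      rw [hz, Real.exp_zero, one_mul]
    nlinarith [h1, h2, e1, e2]
  have hsum : ∑ m, ∑ n, (T m n - T' m n) * (f m + g n) = 0 := by
    have hsplit : ∀ m n, (T m n - T' m n) * (f m + g n)
        = (T m n - T' m n) * f m + (T m n - T' m n) * g n := fun m n => by ring
    simp_rw [hsplit, Finset.sum_add_distrib]
    have h1 : ∑ m, ∑ n, (T m n - T' m n) * f m = 0 := by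
      apply Finset.sum_eq_zero; intro m _
      rw [← Finset.sum_mul, Finset.sum_sub_distrib, hrow m]
      ring
    have h2 : ∑ m, ∑ n, (T m n - T' m n) * g n = 0 := by
      rw [Finset.sum_comm]
      apply Finset.sum_eq_zero; intro n _
      rw [← Finset.sum_mul, Finset.sum_sub_distrib, hcolT n, hcolT' n]
      ring
    rw [h1, h2, add_zero]
  have hzero : ∀ m, ∀ n, (T m n - T' m n) * (f m + g n) = 0 := by
    intro m n
    have houter := (Finset.sum_eq_zero_iff_of_nonneg
      (fun m _ => Finset.sum_nonneg (fun n _ => hFnn m n))).mp hsum m (Finset.mem_univ m)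
    exact (Finset.sum_eq_zero_iff_of_nonneg
      (fun n _ => hFnn m n)).mp houter n (Finset.mem_univ n)
  ext m n
  rcases mul_eq_zero.mp (hzero m n) with h | h
  · linarith
  · rw [hpt m n, h, Real.exp_zero, one_mul]
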